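/- Let r ≥ 1 and let V ⊆ ℝ² be a finite set with |V| ≥ 2r + 4. For points a, b, x, y ∈ ℝ², say Q(ab, xy) holds if a, b, x, y are pairwise distinct and ‖a − x‖ = ‖b − y‖ or ‖a − y‖ = ‖b − x‖. Suppose u₁, u₂, u₃, u₄ ∈ V and v₁, …, v_{2r} ∈ V are such that v₁, …, v_{2r} are pairwise distinct, for every odd i ∈ {1, 3, …, 2r−1} both Q(u₁u₂, v_i v_{i+1}) and Q(u₃u₄, v_i v_{i+1}) hold, and either u₁, u₂, u₃, u₄ are pairwise distinct, or u₂ = u₃ and u₁, u₂, u₄ are pairwise distinct. Then there exist 2r + 4 distinct points in V that determine at most C(2r+4, 2) − 2r distinct distances. -/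

import Mathlib

open scoped Classical

/-- The number of distinct distances determined by a finite planar point set `P`. -/
noncomputable def distinctDists (P : Finset (EuclideanSpace ℝ (Fin 2))) : ℕ :=
  (((P ×ˢ P).filter fun q => q.1 ≠ q.2).image fun q => dist q.1 q.2).card

/-- `Q(ab, xy)` holds if the four points are pairwise distinct and
`‖a - x‖ = ‖b - y‖` or `‖a - y‖ = ‖b - x‖`. -/
def QRel (a b x y : EuclideanSpace ℝ (Fin 2)) : Prop :=
  (a ≠ b ∧ a ≠ x ∧ a ≠ y ∧ b ≠ x ∧ b ≠ y ∧ x ≠ y) ∧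
    (dist a x = dist b y ∨ dist a y = dist b x)

noncomputable def gdist : Sym2 (EuclideanSpace ℝ (Fin 2)) → ℝ :=
  Sym2.lift ⟨dist, fun a b => dist_comm a b⟩

@[simp] lemma gdist_mk (a b : EuclideanSpace ℝ (Fin 2)) : gdist s(a, b) = dist a b := rfl

lemma distinctDists_eq (T : Finset (EuclideanSpace ℝ (Fin 2))) :
    distinctDists T = ((T.offDiag.image Sym2.mk.uncurry).image gdist).card := by
  rw [distinctDists, Finset.image_image]
  have hoff : (T ×ˢ T).filter (fun q => q.1 ≠ q.2) = T.offDiag := by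
    ext q; simp [and_assoc]
  rw [hoff]; rfl

lemma count_aux (r : ℕ) (T : Finset (EuclideanSpace ℝ (Fin 2)))
    (u₁ u₂ u₃ u₄ : EuclideanSpace ℝ (Fin 2))
    (h1T : u₁ ∈ T) (h2T : u₂ ∈ T) (h3T : u₃ ∈ T) (h4T : u₄ ∈ T)
    (x y : Fin r → EuclideanSpace ℝ (Fin 2))
    (hxT : ∀ i, x i ∈ T) (hyT : ∀ i, y i ∈ T)
    (hTcard : T.card = 2 * r + 4)
    (h12 : u₁ ≠ u₂) (h14 : u₁ ≠ u₄) (h24 : u₂ ≠ u₄) (h31 : u₃ ≠ u₁) (h34 : u₃ ≠ u₄)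
    (hxy : ∀ i j, x i ≠ y j)
    (hxx : ∀ i j, i ≠ j → x i ≠ x j) (hyy : ∀ i j, i ≠ j → y i ≠ y j)
    (hux : ∀ i, u₁ ≠ x i ∧ u₂ ≠ x i ∧ u₃ ≠ x i ∧ u₄ ≠ x i)
    (huy : ∀ i, u₁ ≠ y i ∧ u₂ ≠ y i ∧ u₃ ≠ y i ∧ u₄ ≠ y i)
    (hQ : ∀ i, (dist u₁ (x i) = dist u₂ (y i) ∨ dist u₁ (y i) = dist u₂ (x i)) ∧
               (dist u₃ (x i) = dist u₄ (y i) ∨ dist u₃ (y i) = dist u₄ (x i))) :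
    distinctDists T ≤ (2 * r + 4).choose 2 - 2 * r := by
  classical
  set U : Finset (Sym2 (EuclideanSpace ℝ (Fin 2))) := T.offDiag.image Sym2.mk.uncurry with hUdef
  have hUcard : U.card = (2 * r + 4).choose 2 := by
    rw [hUdef, Sym2.card_image_offDiag, hTcard]
  set zA : Fin r → EuclideanSpace ℝ (Fin 2) :=
    fun i => if dist u₁ (x i) = dist u₂ (y i) then x i else y i with hzA
  set wA : Fin r → EuclideanSpace ℝ (Fin 2) :=
    fun i => if dist u₁ (x i) = dist u₂ (y i) then y i else x i with hwA
  set zB : Fin r → EuclideanSpace ℝ (Fin 2) :=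
    fun i => if dist u₃ (x i) = dist u₄ (y i) then y i else x i with hzB
  set wB : Fin r → EuclideanSpace ℝ (Fin 2) :=
    fun i => if dist u₃ (x i) = dist u₄ (y i) then x i else y i with hwB
  have hzAxy : ∀ i, zA i = x i ∨ zA i = y i := by
    intro i; simp only [hzA]; split_ifs <;> tauto
  have hwAxy : ∀ i, wA i = x i ∨ wA i = y i := by
    intro i; simp only [hwA]; split_ifs <;> tauto
  have hzBxy : ∀ i, zB i = x i ∨ zB i = y i := by
    intro i; simp only [hzB]; split_ifs <;> tauto
  have hwBxy : ∀ i, wB i = x i ∨ wB i = y i := by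
    intro i; simp only [hwB]; split_ifs <;> tauto
  have hu1 : ∀ i (z : EuclideanSpace ℝ (Fin 2)), (z = x i ∨ z = y i) → u₁ ≠ z := by
    rintro i z (rfl | rfl); exacts [(hux i).1, (huy i).1]
  have hu2 : ∀ i (z : EuclideanSpace ℝ (Fin 2)), (z = x i ∨ z = y i) → u₂ ≠ z := by
    rintro i z (rfl | rfl); exacts [(hux i).2.1, (huy i).2.1]
  have hu3 : ∀ i (z : EuclideanSpace ℝ (Fin 2)), (z = x i ∨ z = y i) → u₃ ≠ z := by
    rintro i z (rfl | rfl); exacts [(hux i).2.2.1, (huy i).2.2.1]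
  have hu4 : ∀ i (z : EuclideanSpace ℝ (Fin 2)), (z = x i ∨ z = y i) → u₄ ≠ z := by
    rintro i z (rfl | rfl); exacts [(hux i).2.2.2, (huy i).2.2.2]
  have hTz : ∀ i (z : EuclideanSpace ℝ (Fin 2)), (z = x i ∨ z = y i) → z ∈ T := by
    rintro i z (rfl | rfl); exacts [hxT i, hyT i]
  have hdA : ∀ i, dist u₁ (zA i) = dist u₂ (wA i) := by
    intro i; simp only [hzA, hwA]; split_ifs with h
    · exact h
    · exact (hQ i).1.resolve_left h
  have hdB : ∀ i, dist u₄ (zB i) = dist u₃ (wB i) := by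
    intro i; simp only [hzB, hwB]; split_ifs with h
    · exact h.symm
    · exact ((hQ i).2.resolve_left h).symm
  have hzAne : ∀ i j, i ≠ j → zA i ≠ zA j := by
    intro i j hij
    rcases hzAxy i with h1 | h1 <;> rcases hzAxy j with h2 | h2 <;> rw [h1, h2]
    exacts [hxx i j hij, hxy i j, (hxy j i).symm, hyy i j hij]
  have hzBne : ∀ i j, i ≠ j → zB i ≠ zB j := by
    intro i j hij
    rcases hzBxy i with h1 | h1 <;> rcases hzBxy j with h2 | h2 <;> rw [h1, h2]
    exacts [hxx i j hij, hxy i j, (hxy j i).symm, hyy i j hij]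
  set ρ : Fin r × Bool → Sym2 (EuclideanSpace ℝ (Fin 2)) :=
    fun p => if p.2 then s(u₄, zB p.1) else s(u₁, zA p.1) with hρ
  have hρinj : Function.Injective ρ := by
    rintro ⟨i, bi⟩ ⟨j, bj⟩ h
    cases bi <;> cases bj <;>
      simp only [hρ, if_true, if_false, Bool.false_eq_true, Sym2.eq_iff] at h
    · rcases h with ⟨-, h⟩ | ⟨h, -⟩
      · have : i = j := by by_contra hij; exact hzAne i j hij h
        simp [this]
      · exact absurd h (hu1 j _ (hzAxy j))
    · rcases h with ⟨h, -⟩ | ⟨h, -⟩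
      · exact absurd h h14
      · exact absurd h (hu1 j _ (hzBxy j))
    · rcases h with ⟨h, -⟩ | ⟨h, -⟩
      · exact absurd h.symm h14
      · exact absurd h (hu4 j _ (hzAxy j))
    · rcases h with ⟨-, h⟩ | ⟨h, -⟩
      · have : i = j := by by_contra hij; exact hzBne i j hij h
        simp [this]
      · exact absurd h (hu4 j _ (hzBxy j))
  set R : Finset (Sym2 (EuclideanSpace ℝ (Fin 2))) := Finset.image ρ Finset.univ with hR
  have hRcard : R.card = 2 * r := by
    rw [hR, Finset.card_image_of_injective _ hρinj, Finset.card_univ, Fintype.card_prod,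
      Fintype.card_fin, Fintype.card_bool]
    ring
  have hRsubU : R ⊆ U := by
    intro z hz
    obtain ⟨⟨i, b⟩, -, rfl⟩ := Finset.mem_image.1 hz
    cases b <;> simp only [hρ, if_true, if_false, Bool.false_eq_true]
    · exact Finset.mem_image_of_mem _
        (Finset.mem_offDiag.2 ⟨h1T, hTz i _ (hzAxy i), hu1 i _ (hzAxy i)⟩)
    · exact Finset.mem_image_of_mem _
        (Finset.mem_offDiag.2 ⟨h4T, hTz i _ (hzBxy i), hu4 i _ (hzBxy i)⟩)
  have hkeptA : ∀ i, s(u₂, wA i) ∈ U \ R := by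
    intro i
    refine Finset.mem_sdiff.2 ⟨Finset.mem_image_of_mem _
      (Finset.mem_offDiag.2 ⟨h2T, hTz i _ (hwAxy i), hu2 i _ (hwAxy i)⟩), ?_⟩
    intro hmem
    obtain ⟨⟨j, b⟩, -, hb⟩ := Finset.mem_image.1 hmem
    cases b <;> simp only [hρ, if_true, if_false, Bool.false_eq_true, Sym2.eq_iff] at hb
    · rcases hb with ⟨h, -⟩ | ⟨h, -⟩
      · exact absurd h h12
      · exact absurd h (hu1 i _ (hwAxy i))
    · rcases hb with ⟨h, -⟩ | ⟨h, -⟩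
      · exact absurd h h24.symm
      · exact absurd h (hu4 i _ (hwAxy i))
  have hkeptB : ∀ i, s(u₃, wB i) ∈ U \ R := by
    intro i
    refine Finset.mem_sdiff.2 ⟨Finset.mem_image_of_mem _
      (Finset.mem_offDiag.2 ⟨h3T, hTz i _ (hwBxy i), hu3 i _ (hwBxy i)⟩), ?_⟩
    intro hmem
    obtain ⟨⟨j, b⟩, -, hb⟩ := Finset.mem_image.1 hmem
    cases b <;> simp only [hρ, if_true, if_false, Bool.false_eq_true, Sym2.eq_iff] at hb
    · rcases hb with ⟨h, -⟩ | ⟨h, -⟩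
      · exact absurd h.symm h31
      · exact absurd h (hu1 i _ (hwBxy i))
    · rcases hb with ⟨h, -⟩ | ⟨h, -⟩
      · exact absurd h.symm h34
      · exact absurd h (hu4 i _ (hwBxy i))
  have hsub : U.image gdist ⊆ (U \ R).image gdist := by
    intro d hd
    obtain ⟨z, hzU, rfl⟩ := Finset.mem_image.1 hd
    by_cases hzR : z ∈ R
    · obtain ⟨⟨i, b⟩, -, rfl⟩ := Finset.mem_image.1 hzR
      cases b
      · refine Finset.mem_image.2 ⟨s(u₂, wA i), hkeptA i, ?_⟩
        simp only [hρ, Bool.false_eq_true, if_false, gdist_mk]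
        exact (hdA i).symm
      · refine Finset.mem_image.2 ⟨s(u₃, wB i), hkeptB i, ?_⟩
        simp only [hρ, if_true, gdist_mk]
        exact (hdB i).symm
    · exact Finset.mem_image.2 ⟨z, Finset.mem_sdiff.2 ⟨hzU, hzR⟩, rfl⟩
  calc distinctDists T = (U.image gdist).card := distinctDists_eq T
    _ ≤ ((U \ R).image gdist).card := Finset.card_le_card hsub
    _ ≤ (U \ R).card := Finset.card_image_le
    _ = U.card - R.card := Finset.card_sdiff_of_subset hRsubU
    _ = (2 * r + 4).choose 2 - 2 * r := by rw [hUcard, hRcard]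

/-- Observation 5.6: if `(u₁u₂, v_i v_{i+1})` and `(u₃u₄, v_i v_{i+1})` satisfy `Q`
for every odd `i ≤ 2r - 1`, where `v₁, …, v_{2r} ∈ V` are pairwise distinct and either
`u₁, u₂, u₃, u₄ ∈ V` are pairwise distinct or `u₂ = u₃` with `u₁, u₂, u₄` pairwise
distinct, then some `2r + 4` distinct points of `V` determine at most
`C(2r+4, 2) - 2r` distinct distances. -/
theorem K2r_repeated_distances (r : ℕ) (hr : 1 ≤ r)
    (V : Finset (EuclideanSpace ℝ (Fin 2))) (hV : 2 * r + 4 ≤ V.card)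
    (u₁ u₂ u₃ u₄ : EuclideanSpace ℝ (Fin 2))
    (hu₁ : u₁ ∈ V) (hu₂ : u₂ ∈ V) (hu₃ : u₃ ∈ V) (hu₄ : u₄ ∈ V)
    (v : Fin (2 * r) → EuclideanSpace ℝ (Fin 2))
    (hvV : ∀ i, v i ∈ V) (hvinj : Function.Injective v)
    (hQ : ∀ i : Fin r,
      QRel u₁ u₂ (v ⟨2 * i.1, by have := i.isLt; omega⟩)
        (v ⟨2 * i.1 + 1, by have := i.isLt; omega⟩) ∧
      QRel u₃ u₄ (v ⟨2 * i.1, by have := i.isLt; omega⟩)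
        (v ⟨2 * i.1 + 1, by have := i.isLt; omega⟩))
    (hcase :
      (u₁ ≠ u₂ ∧ u₁ ≠ u₃ ∧ u₁ ≠ u₄ ∧ u₂ ≠ u₃ ∧ u₂ ≠ u₄ ∧ u₃ ≠ u₄) ∨
      (u₂ = u₃ ∧ u₁ ≠ u₂ ∧ u₁ ≠ u₄ ∧ u₂ ≠ u₄)) :
    ∃ T ⊆ V, T.card = 2 * r + 4 ∧
      distinctDists T ≤ (2 * r + 4).choose 2 - 2 * r := by
  classical
  set x : Fin r → EuclideanSpace ℝ (Fin 2) :=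
    fun i => v ⟨2 * i.1, by have := i.isLt; omega⟩ with hxdef
  set y : Fin r → EuclideanSpace ℝ (Fin 2) :=
    fun i => v ⟨2 * i.1 + 1, by have := i.isLt; omega⟩ with hydef
  have hxy : ∀ i j, x i ≠ y j := by
    intro i j h
    have := hvinj h
    have := Fin.val_eq_of_eq this
    simp at this
    omega
  have hxx : ∀ i j, i ≠ j → x i ≠ x j := by
    intro i j hij h
    have := Fin.val_eq_of_eq (hvinj h)
    simp at this
    exact hij (Fin.ext (by omega))
  have hyy : ∀ i j, i ≠ j → y i ≠ y j := by
    intro i j hij h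
    have := Fin.val_eq_of_eq (hvinj h)
    simp at this
    exact hij (Fin.ext (by omega))
  have hux : ∀ i, u₁ ≠ x i ∧ u₂ ≠ x i ∧ u₃ ≠ x i ∧ u₄ ≠ x i := by
    intro i
    obtain ⟨⟨⟨-, h1, -, h2, -, -⟩, -⟩, ⟨-, h3, -, h4, -, -⟩, -⟩ := hQ i
    exact ⟨h1, h2, h3, h4⟩
  have huy : ∀ i, u₁ ≠ y i ∧ u₂ ≠ y i ∧ u₃ ≠ y i ∧ u₄ ≠ y i := by
    intro i
    obtain ⟨⟨⟨-, -, h1, -, h2, -⟩, -⟩, ⟨-, -, h3, -, h4, -⟩, -⟩ := hQ i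
    exact ⟨h1, h2, h3, h4⟩
  have hQ' : ∀ i, (dist u₁ (x i) = dist u₂ (y i) ∨ dist u₁ (y i) = dist u₂ (x i)) ∧
      (dist u₃ (x i) = dist u₄ (y i) ∨ dist u₃ (y i) = dist u₄ (x i)) :=
    fun i => ⟨(hQ i).1.2, (hQ i).2.2⟩
  have hsplit : ∀ i : Fin (2 * r), ∃ j : Fin r, v i = x j ∨ v i = y j := by
    intro i
    have hlt := i.isLt
    refine ⟨⟨i.1 / 2, by omega⟩, ?_⟩
    by_cases h2 : i.1 % 2 = 0
    · exact Or.inl (congrArg v (Fin.ext (show i.1 = 2 * (i.1 / 2) by omega)))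
    · exact Or.inr (congrArg v (Fin.ext (show i.1 = 2 * (i.1 / 2) + 1 by omega)))
  have huv : ∀ i : Fin (2 * r), u₁ ≠ v i ∧ u₂ ≠ v i ∧ u₃ ≠ v i ∧ u₄ ≠ v i := by
    intro i
    obtain ⟨j, hj | hj⟩ := hsplit i
    · rw [hj]; exact hux j
    · rw [hj]; exact huy j
  have hvcard : (Finset.image v Finset.univ).card = 2 * r := by
    rw [Finset.card_image_of_injective _ hvinj, Finset.card_univ, Fintype.card_fin]
  have hxmem : ∀ i, x i ∈ Finset.image v Finset.univ := fun i =>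
    Finset.mem_image_of_mem _ (Finset.mem_univ _)
  have hymem : ∀ i, y i ∈ Finset.image v Finset.univ := fun i =>
    Finset.mem_image_of_mem _ (Finset.mem_univ _)
  rcases hcase with ⟨h12, h13, h14, h23, h24, h34⟩ | ⟨heq, h12, h14, h24⟩
  · -- all four distinct
    set T : Finset (EuclideanSpace ℝ (Fin 2)) :=
      insert u₁ (insert u₂ (insert u₃ (insert u₄ (Finset.image v Finset.univ)))) with hT
    have hn4 : u₄ ∉ Finset.image v Finset.univ := by
      simp only [Finset.mem_image]
      rintro ⟨i, -, h⟩
      exact (huv i).2.2.2 h.symm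
    have hn3 : u₃ ∉ insert u₄ (Finset.image v Finset.univ) := by
      simp only [Finset.mem_insert, Finset.mem_image]
      rintro (h | ⟨i, -, h⟩)
      exacts [h34 h, (huv i).2.2.1 h.symm]
    have hn2 : u₂ ∉ insert u₃ (insert u₄ (Finset.image v Finset.univ)) := by
      simp only [Finset.mem_insert, Finset.mem_image]
      rintro (h | h | ⟨i, -, h⟩)
      exacts [h23 h, h24 h, (huv i).2.1 h.symm]
    have hn1 : u₁ ∉ insert u₂ (insert u₃ (insert u₄ (Finset.image v Finset.univ))) := by
      simp only [Finset.mem_insert, Finset.mem_image]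
      rintro (h | h | h | ⟨i, -, h⟩)
      exacts [h12 h, h13 h, h14 h, (huv i).1 h.symm]
    have hTcard : T.card = 2 * r + 4 := by
      rw [hT, Finset.card_insert_of_notMem hn1, Finset.card_insert_of_notMem hn2,
        Finset.card_insert_of_notMem hn3, Finset.card_insert_of_notMem hn4, hvcard]
    have hTV : T ⊆ V := by
      intro z hz
      simp only [hT, Finset.mem_insert, Finset.mem_image] at hz
      rcases hz with rfl | rfl | rfl | rfl | ⟨i, -, rfl⟩
      exacts [hu₁, hu₂, hu₃, hu₄, hvV i]
    refine ⟨T, hTV, hTcard, ?_⟩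
    refine count_aux r T u₁ u₂ u₃ u₄ ?_ ?_ ?_ ?_ x y ?_ ?_ hTcard h12 h14 h24 h13.symm h34
      hxy hxx hyy hux huy hQ'
    · simp [hT]
    · simp [hT]
    · simp [hT]
    · simp [hT]
    · intro i; simp only [hT, Finset.mem_insert]; exact Or.inr (Or.inr (Or.inr (Or.inr (hxmem i))))
    · intro i; simp only [hT, Finset.mem_insert]; exact Or.inr (Or.inr (Or.inr (Or.inr (hymem i))))
  · -- u₂ = u₃
    subst heq
    set S : Finset (EuclideanSpace ℝ (Fin 2)) :=
      insert u₁ (insert u₂ (insert u₄ (Finset.image v Finset.univ))) with hS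
    have hn4 : u₄ ∉ Finset.image v Finset.univ := by
      simp only [Finset.mem_image]
      rintro ⟨i, -, h⟩
      exact (huv i).2.2.2 h.symm
    have hn2 : u₂ ∉ insert u₄ (Finset.image v Finset.univ) := by
      simp only [Finset.mem_insert, Finset.mem_image]
      rintro (h | ⟨i, -, h⟩)
      exacts [h24 h, (huv i).2.1 h.symm]
    have hn1 : u₁ ∉ insert u₂ (insert u₄ (Finset.image v Finset.univ)) := by
      simp only [Finset.mem_insert, Finset.mem_image]
      rintro (h | h | ⟨i, -, h⟩)
      exacts [h12 h, h14 h, (huv i).1 h.symm]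
    have hScard : S.card = 2 * r + 3 := by
      rw [hS, Finset.card_insert_of_notMem hn1, Finset.card_insert_of_notMem hn2,
        Finset.card_insert_of_notMem hn4, hvcard]
    have hSV : S ⊆ V := by
      intro z hz
      simp only [hS, Finset.mem_insert, Finset.mem_image] at hz
      rcases hz with rfl | rfl | rfl | ⟨i, -, rfl⟩
      exacts [hu₁, hu₂, hu₄, hvV i]
    have hne : (V \ S).Nonempty := by
      rw [← Finset.card_pos, Finset.card_sdiff_of_subset hSV]
      omega
    obtain ⟨w, hw⟩ := hne
    obtain ⟨hwV, hwS⟩ := Finset.mem_sdiff.1 hw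
    set T : Finset (EuclideanSpace ℝ (Fin 2)) := insert w S with hT
    have hTcard : T.card = 2 * r + 4 := by
      rw [hT, Finset.card_insert_of_notMem hwS, hScard]
    have hTV : T ⊆ V := by
      intro z hz
      rcases Finset.mem_insert.1 hz with rfl | hz
      exacts [hwV, hSV hz]
    refine ⟨T, hTV, hTcard, ?_⟩
    have hST : S ⊆ T := Finset.subset_insert _ _
    refine count_aux r T u₁ u₂ u₂ u₄ ?_ ?_ ?_ ?_ x y ?_ ?_ hTcard h12 h14 h24 h12.symm h24
      hxy hxx hyy hux huy hQ'
    · exact hST (by simp [hS])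
    · exact hST (by simp [hS])
    · exact hST (by simp [hS])
    · exact hST (by simp [hS])
    · intro i
      exact hST (by simp only [hS, Finset.mem_insert]; exact Or.inr (Or.inr (Or.inr (hxmem i))))
    · intro i
      exact hST (by simp only [hS, Finset.mem_insert]; exact Or.inr (Or.inr (Or.inr (hymem i))))
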